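/- arXiv:1705.10533 — 2 statements merged into one kernel-verified Lean document; each statement's English description precedes it below -/
import Mathlib

section
/- A regular language L is reversible if and only if its minimal trim partial DFA M contains no pattern consisting of distinct states p ≠ q, a letter a, and a word w such that p·a = q·a and (p·a)·w = p. -/
/-- A partial deterministic finite automaton (partial DFA). -/
structure PDFA (Q A : Type) where
  step : Q → A → Option Q
  init : Q
  acc : Q → Prop

namespace PDFA

variable {Q A : Type}

/-- Extended (partial) transition function on words. -/
def run (M : PDFA Q A) : Q → List A → Option Q
  | q, [] => some q
  | q, a :: w => (M.step q a).bind fun q' => M.run q' w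

/-- The language accepted from state `q`. -/
def LangFrom (M : PDFA Q A) (q : Q) : Set (List A) :=
  {w | ∃ q', M.run q w = some q' ∧ M.acc q'}

/-- The language of the automaton. -/
def Lang (M : PDFA Q A) : Set (List A) := M.LangFrom M.init

/-- An automaton is reversible if distinct states are never merged by a letter. -/
def Reversible (M : PDFA Q A) : Prop :=
  ∀ p q a r, M.step p a = some r → M.step q a = some r → p = q

/-- `Θ` is a congruence: an equivalence relation saturating the final states and
compatible with the (partial) action, including definedness. -/
def IsCongruence (M : PDFA Q A) (Θ : Q → Q → Prop) : Prop :=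
  Equivalence Θ ∧
  (∀ p q, Θ p q → (M.acc p ↔ M.acc q)) ∧
  (∀ p q a, Θ p q → ((M.step p a).isSome ↔ (M.step q a).isSome) ∧
    ∀ p' q', M.step p a = some p' → M.step q a = some q' → Θ p' q')

/-- A reversible congruence: a congruence whose factor automaton is reversible,
equivalently `p·a Θ q·a` (both defined) implies `p Θ q`. -/
def IsRevCongruence (M : PDFA Q A) (Θ : Q → Q → Prop) : Prop :=
  M.IsCongruence Θ ∧
  ∀ p q a p' q', M.step p a = some p' → M.step q a = some q' → Θ p' q' → Θ p q

def Reachable (M : PDFA Q A) (q : Q) : Prop := ∃ w, M.run M.init w = some q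

def Productive (M : PDFA Q A) (q : Q) : Prop := ∃ w, w ∈ M.LangFrom q

/-- A trim automaton: all states reachable and productive. -/
def Trim (M : PDFA Q A) : Prop := ∀ q, M.Reachable q ∧ M.Productive q

/-- The set of access words of a state. -/
def AccessWords (M : PDFA Q A) (q : Q) : Set (List A) :=
  {w | M.run M.init w = some q}

/-- An `∞`-state: reachable by infinitely many words. -/
def InfState (M : PDFA Q A) (q : Q) : Prop := (M.AccessWords q).Infinite

/-- A `1`-state: reachable by exactly one word. -/
def OneState (M : PDFA Q A) (q : Q) : Prop := ∃! w, w ∈ M.AccessWords q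

/-- A `⊕`-state: neither a `1`-state nor an `∞`-state. -/
def PlusState (M : PDFA Q A) (q : Q) : Prop := ¬ M.OneState q ∧ ¬ M.InfState q

/-- An irreversible state: reachable from two distinct states by a common word. -/
def IrrevState (M : PDFA Q A) (r : Q) : Prop :=
  ∃ p₁ p₂ u, p₁ ≠ p₂ ∧ M.run p₁ u = some r ∧ M.run p₂ u = some r

/-- Zig-zag states: the least set containing the `∞`-states, closed under defined
forward transitions, and containing every `⊕`-state with a transition into the set. -/
inductive ZigZag (M : PDFA Q A) : Q → Prop
  | inf {q} : M.InfState q → ZigZag M q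
  | fwd {q a q'} : ZigZag M q → M.step q a = some q' → ZigZag M q'
  | back {q a q'} : M.PlusState q → M.step q a = some q' → ZigZag M q' → ZigZag M q

/-- A reduced reversible automaton: trim, reversible, with no nontrivial reversible
congruence. -/
def ReducedReversible (M : PDFA Q A) : Prop :=
  M.Trim ∧ M.Reversible ∧ ∀ Θ, M.IsRevCongruence Θ → ∀ p q, Θ p q → p = q

/-- `n`-fold repetition of a word. -/
def wpow (w : List A) (n : ℕ) : List A := (List.replicate n w).flatten

end PDFA
namespace PDFA
variable {Q A : Type}

theorem run_append (M : PDFA Q A) (s : Q) (u v : List A) :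
    M.run s (u ++ v) = (M.run s u).bind fun q => M.run q v := by
  induction u generalizing s with
  | nil => simp [run]
  | cons a u ih =>
    simp only [List.cons_append, run]
    cases M.step s a <;> simp [ih]

def Reach (M : PDFA Q A) (p q : Q) : Prop := ∃ w, M.run p w = some q

theorem reach_refl {M : PDFA Q A} (p : Q) : Reach M p p := ⟨[], Eq.refl _⟩

theorem Reach.trans {M : PDFA Q A} {p q r : Q} (h1 : Reach M p q) (h2 : Reach M q r) :
    Reach M p r := by
  obtain ⟨u, hu⟩ := h1; obtain ⟨v, hv⟩ := h2
  exact ⟨u ++ v, by rw [run_append, hu]; exact hv⟩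

theorem reach_step {M : PDFA Q A} {p r : Q} {a : A} (h : M.step p a = some r) :
    Reach M p r := ⟨[a], by simp [run, h]⟩

open Classical in
noncomputable def revAut (M : PDFA Q A) : PDFA (Q × Set (Q × Q)) A where
  step x a := (M.step x.1 a).bind fun r =>
    if Reach M r x.1 then some (r, x.2)
    else if ∃ p, (p, r) ∈ x.2 then none
    else some (r, insert (x.1, r) x.2)
  init := (M.init, ∅)
  acc x := M.acc x.1

theorem revAut_step_some {M : PDFA Q A} {x z : Q × Set (Q × Q)} {a : A}
    (h : (revAut M).step x a = some z) :
    M.step x.1 a = some z.1 ∧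
    ((Reach M z.1 x.1 ∧ z.2 = x.2) ∨
     (¬ Reach M z.1 x.1 ∧ ¬ (∃ p, (p, z.1) ∈ x.2) ∧ z.2 = insert (x.1, z.1) x.2)) := by
  simp only [revAut, Option.bind_eq_some_iff] at h
  obtain ⟨r, hr, h⟩ := h
  by_cases h1 : Reach M r x.1
  · rw [if_pos h1] at h
    rw [Option.some.injEq] at h
    subst h
    exact ⟨hr, Or.inl ⟨h1, rfl⟩⟩
  · rw [if_neg h1] at h
    by_cases h2 : ∃ p, (p, r) ∈ x.2
    · rw [if_pos h2] at h; exact absurd h (by simp)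
    · rw [if_neg h2, Option.some.injEq] at h
      subst h
      exact ⟨hr, Or.inr ⟨h1, h2, rfl⟩⟩

theorem revAut_reversible {M : PDFA Q A}
    (hC : ¬ ∃ (p q r : Q) (a : A) (w : List A), p ≠ q ∧
        M.step p a = some r ∧ M.step q a = some r ∧ M.run r w = some p) :
    (revAut M).Reversible := by
  have key : ∀ p q r (a : A), M.step p a = some r → M.step q a = some r →
      Reach M r p → p = q := by
    intro p q r a h1 h2 hre
    obtain ⟨w, hw⟩ := hre
    by_contra hne
    exact hC ⟨p, q, r, a, w, hne, h1, h2, hw⟩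
  intro x y a z hx hy
  obtain ⟨hx1, hx2⟩ := revAut_step_some hx
  obtain ⟨hy1, hy2⟩ := revAut_step_some hy
  have hxy1 : x.1 = y.1 := by
    by_contra hne
    have hnx : ¬ Reach M z.1 x.1 := fun hr => hne (key x.1 y.1 z.1 a hx1 hy1 hr)
    have hny : ¬ Reach M z.1 y.1 := fun hr => hne ((key y.1 x.1 z.1 a hy1 hx1 hr).symm)
    obtain ⟨-, hx3, hx4⟩ := hx2.resolve_left (fun h => hnx h.1)
    obtain ⟨-, hy3, hy4⟩ := hy2.resolve_left (fun h => hny h.1)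
    have hmem : (y.1, z.1) ∈ (insert (x.1, z.1) x.2 : Set (Q × Q)) := by
      rw [← hx4, hy4]; exact Set.mem_insert _ _
    rcases hmem with heq | hmem
    · exact hne (congrArg Prod.fst heq).symm
    · exact hx3 ⟨y.1, hmem⟩
  have hxy2 : x.2 = y.2 := by
    rcases hx2 with ⟨hrx, hzx⟩ | ⟨hrx, hx3, hzx⟩
    · rcases hy2 with ⟨hry, hzy⟩ | ⟨hry, hy3, hzy⟩
      · rw [← hzx, ← hzy]
      · exact absurd (hxy1 ▸ hrx) hry
    · rcases hy2 with ⟨hry, hzy⟩ | ⟨hry, hy3, hzy⟩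
      · exact absurd (hxy1 ▸ hry) (hxy1 ▸ hrx)
      · have hnx : (x.1, z.1) ∉ x.2 := fun hm => hx3 ⟨x.1, hm⟩
        have hny : (x.1, z.1) ∉ y.2 := fun hm => hy3 ⟨x.1, hxy1 ▸ hm⟩
        have he : insert (x.1, z.1) x.2 = insert (x.1, z.1) y.2 := by
          rw [← hzx, hzy, ← hxy1]
        calc x.2 = insert (x.1, z.1) x.2 \ {(x.1, z.1)} :=
              (Set.insert_diff_self_of_notMem hnx).symm
          _ = insert (x.1, z.1) y.2 \ {(x.1, z.1)} := by rw [he]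
          _ = y.2 := Set.insert_diff_self_of_notMem hny
  exact Prod.ext hxy1 hxy2

theorem revAut_run_forward {M : PDFA Q A} :
    ∀ (w : List A) (s : Q) (S : Set (Q × Q)),
      (∀ pr ∈ S, Reach M (Prod.snd pr) s) →
      ∀ s', M.run s w = some s' →
        ∃ S', (revAut M).run (s, S) w = some (s', S') ∧
          ∀ pr ∈ S', Reach M (Prod.snd pr) s' := by
  intro w
  induction w with
  | nil =>
    intro s S hS s' h
    simp only [run, Option.some.injEq] at h
    subst h
    exact ⟨S, rfl, hS⟩
  | cons a w ih =>
    intro s S hS s' h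
    simp only [run, Option.bind_eq_some_iff] at h
    obtain ⟨r, hr, hrun⟩ := h
    by_cases h1 : Reach M r s
    · have hS' : ∀ pr ∈ S, Reach M (Prod.snd pr) r :=
        fun pr hpr => (hS pr hpr).trans (reach_step hr)
      obtain ⟨S', hrun', hS''⟩ := ih r S hS' s' hrun
      refine ⟨S', ?_, hS''⟩
      show ((revAut M).step (s, S) a).bind _ = _
      have hstep : (revAut M).step (s, S) a = some (r, S) := by
        simp only [revAut, hr, Option.bind_some, if_pos h1]
      rw [hstep, Option.bind_some]
      exact hrun'
    · have h2 : ¬ ∃ p, (p, r) ∈ S := fun ⟨p, hp⟩ => h1 (hS (p, r) hp)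
      have hS' : ∀ pr ∈ insert (s, r) S, Reach M (Prod.snd pr) r := by
        intro pr hpr
        rcases hpr with heq | hpr
        · rw [heq]; exact reach_refl r
        · exact (hS pr hpr).trans (reach_step hr)
      obtain ⟨S', hrun', hS''⟩ := ih r _ hS' s' hrun
      refine ⟨S', ?_, hS''⟩
      show ((revAut M).step (s, S) a).bind _ = _
      have hstep : (revAut M).step (s, S) a = some (r, insert (s, r) S) := by
        simp only [revAut, hr, Option.bind_some, if_neg h1, if_neg h2]
      rw [hstep, Option.bind_some]
      exact hrun'

theorem revAut_run_proj {M : PDFA Q A} :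
    ∀ (w : List A) (x y : Q × Set (Q × Q)),
      (revAut M).run x w = some y → M.run x.1 w = some y.1 := by
  intro w
  induction w with
  | nil =>
    intro x y h
    simp only [run, Option.some.injEq] at h ⊢
    rw [h]
  | cons a w ih =>
    intro x y h
    simp only [run, Option.bind_eq_some_iff] at h ⊢
    obtain ⟨x', hstep, hrun⟩ := h
    exact ⟨x'.1, (revAut_step_some hstep).1, ih _ _ hrun⟩

theorem revAut_lang {M : PDFA Q A} : (revAut M).Lang = M.Lang := by
  ext w
  constructor
  · rintro ⟨x, hrun, hacc⟩
    exact ⟨x.1, revAut_run_proj w _ x hrun, hacc⟩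
  · rintro ⟨s', hrun, hacc⟩
    obtain ⟨S', hrun', -⟩ := revAut_run_forward w M.init ∅ (by simp) s' hrun
    exact ⟨(s', S'), hrun', hacc⟩

theorem run_injective {M : PDFA Q A} (h : M.Reversible) :
    ∀ (w : List A) (x y z : Q), M.run x w = some z → M.run y w = some z → x = y := by
  intro w
  induction w with
  | nil =>
    intro x y z hx hy
    simp only [run, Option.some.injEq] at hx hy; rw [hx, hy]
  | cons a w ih =>
    intro x y z hx hy
    simp only [run, Option.bind_eq_some_iff] at hx hy
    obtain ⟨x', hx1, hx2⟩ := hx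
    obtain ⟨y', hy1, hy2⟩ := hy
    have := ih x' y' z hx2 hy2
    subst this
    exact h x y a x' hx1 hy1

theorem wpow_succ (w : List A) (n : ℕ) : wpow w (n + 1) = w ++ wpow w n := by
  simp [wpow, List.replicate_succ]

theorem wpow_add (w : List A) (m n : ℕ) : wpow w (m + n) = wpow w m ++ wpow w n := by
  unfold wpow
  rw [List.replicate_add, List.flatten_append]


theorem stmt17_fwd {Q A : Type} [Fintype Q] (M : PDFA Q A)
    (hMtrim : M.Trim)
    (hMmin : ∀ p q : Q, M.LangFrom p = M.LangFrom q → p = q)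
    {Q₀ : Type} (instQ₀ : Fintype Q₀) (N : PDFA Q₀ A)
    (hNrev : N.Reversible) (hNlang : N.Lang = M.Lang) :
    ¬ ∃ (p q r : Q) (a : A) (w : List A), p ≠ q ∧
        M.step p a = some r ∧ M.step q a = some r ∧ M.run r w = some p := by
  haveI := instQ₀
  rintro ⟨p, q, r, a, w, hpq, hpa, hqa, hrw⟩
  set c := a :: w with hc
  have hpc : M.run p c = some p := by simp [hc, run, hpa, hrw]
  have hqc : M.run q c = some p := by simp [hc, run, hqa, hrw]
  have hpow : ∀ n, M.run p (wpow c n) = some p := by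
    intro n
    induction n with
    | zero => rfl
    | succ n ih => rw [wpow_succ, run_append, hpc, Option.bind_some]; exact ih
  obtain ⟨u, hu⟩ := (hMtrim q).1
  obtain ⟨z0, f, hz0, haccf⟩ := (hMtrim p).2
  have hqpow : ∀ n, M.run q (wpow c (n + 1)) = some p := by
    intro n
    rw [wpow_succ, run_append, hqc, Option.bind_some]
    exact hpow n
  have hWn : ∀ n, ∃ t, M.run M.init (u ++ wpow c n) = some t ∧ M.run t c = some p := by
    intro n
    cases n with
    | zero => exact ⟨q, by simpa [wpow] using hu, hqc⟩
    | succ n =>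
      refine ⟨p, ?_, hpc⟩
      rw [run_append, hu, Option.bind_some]
      exact hqpow n
  have hmem : ∀ n, (u ++ wpow c n) ++ (c ++ z0) ∈ M.Lang := by
    intro n
    obtain ⟨t, ht, htc⟩ := hWn n
    refine ⟨f, ?_, haccf⟩
    rw [run_append, ht, Option.bind_some, run_append, htc, Option.bind_some]
    exact hz0
  have hNdef : ∀ n, ∃ x, N.run N.init (u ++ wpow c n) = some x := by
    intro n
    have hm := hmem n
    rw [← hNlang] at hm
    obtain ⟨f', hf', -⟩ := hm
    rw [run_append] at hf'
    cases hx : N.run N.init (u ++ wpow c n) with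
    | none => rw [hx] at hf'; simp at hf'
    | some x => exact ⟨x, rfl⟩
  choose g hg using hNdef
  have hstep : ∀ i j, i ≤ j → N.run (g i) (wpow c (j - i)) = some (g j) := by
    intro i j hij
    have h1 := hg j
    rw [show u ++ wpow c j = (u ++ wpow c i) ++ wpow c (j - i) by
          rw [List.append_assoc, ← wpow_add, Nat.add_sub_cancel' hij],
        run_append, hg i, Option.bind_some] at h1
    exact h1
  obtain ⟨i, j, hij, hgij⟩ := Finite.exists_ne_map_eq_of_infinite g
  -- wlog i < j
  have main : ∀ i j, i < j → g i = g j → False := by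
    intro i j hlt hgeq
    set m := j - i with hm
    have hmpos : 0 < m := Nat.sub_pos_of_lt hlt
    have h1 : N.run (g 0) (wpow c i) = some (g i) := by
      have := hstep 0 i (Nat.zero_le i); simpa using this
    have h2 : N.run (g m) (wpow c i) = some (g i) := by
      have h3 := hstep m (m + i) (Nat.le_add_right m i)
      rw [Nat.add_sub_cancel_left] at h3
      rw [h3]
      congr 1
      rw [show m + i = j by omega, ← hgeq]
    have h0m : g 0 = g m := run_injective hNrev (wpow c i) (g 0) (g m) (g i) h1 h2
    have hloop : N.run (g 0) (wpow c m) = some (g 0) := by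
      have h3 := hstep 0 m (Nat.zero_le m)
      simpa [← h0m] using h3
    have hgu : N.run N.init u = some (g 0) := by
      have := hg 0; simpa [wpow] using this
    -- LangFrom q = LangFrom p
    have hlangpq : M.LangFrom q = M.LangFrom p := by
      ext x
      have e1 : x ∈ M.LangFrom q ↔ u ++ x ∈ M.Lang := by
        unfold Lang LangFrom
        rw [Set.mem_setOf_eq, Set.mem_setOf_eq, run_append, hu, Option.bind_some]
      have e2 : u ++ x ∈ N.Lang ↔ (u ++ wpow c m) ++ x ∈ N.Lang := by
        unfold Lang LangFrom
        rw [Set.mem_setOf_eq, Set.mem_setOf_eq, run_append, run_append, hgu, hg m,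
          ← h0m]
      have hWm : M.run M.init (u ++ wpow c m) = some p := by
        rw [run_append, hu, Option.bind_some, show m = (m - 1) + 1 by omega]
        exact hqpow (m - 1)
      have e3 : (u ++ wpow c m) ++ x ∈ M.Lang ↔ x ∈ M.LangFrom p := by
        unfold Lang LangFrom
        rw [Set.mem_setOf_eq, Set.mem_setOf_eq, run_append, hWm, Option.bind_some]
      rw [e1, ← hNlang, e2, hNlang, e3]
    exact hpq (hMmin p q hlangpq.symm)
  rcases hij.lt_or_gt with h | h
  · exact main i j h hgij
  · exact main j i h hgij.symm


end PDFA

/-- A regular language is reversible iff its minimal trim partial DFA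
contains no pattern of distinct states `p ≠ q`, a letter `a`, and a word `w` with
`p·a = q·a` and `(p·a)·w = p`. -/
theorem stmt17 {Q A : Type} [Fintype Q] (M : PDFA Q A)
    (hMtrim : M.Trim)
    (hMmin : ∀ p q : Q, M.LangFrom p = M.LangFrom q → p = q) :
    (∃ (Q₀ : Type) (_ : Fintype Q₀) (N : PDFA Q₀ A),
      N.Reversible ∧ N.Lang = M.Lang)
    ↔ ¬ ∃ (p q r : Q) (a : A) (w : List A), p ≠ q ∧
        M.step p a = some r ∧ M.step q a = some r ∧ M.run r w = some p := by
  constructor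
  · rintro ⟨Q₀, instQ₀, N, hNrev, hNlang⟩
    exact PDFA.stmt17_fwd M hMtrim hMmin instQ₀ N hNrev hNlang
  · intro hC
    exact ⟨Q × Set (Q × Q), Fintype.ofFinite _, PDFA.revAut M,
      PDFA.revAut_reversible hC, PDFA.revAut_lang⟩
end

section
/- Let M be a trim partial DFA. Every zig-zag state of M is reachable from the initial state by at least two distinct words (i.e., no zig-zag state is a 1-state). -/
theorem run_append {Q A : Type} (M : PDFA Q A) (q : Q) (u v : List A) :
    M.run q (u ++ v) = (M.run q u).bind fun q' => M.run q' v := by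
  induction u generalizing q with
  | nil => simp [PDFA.run]
  | cons a u ih =>
    simp only [List.cons_append, PDFA.run]
    cases M.step q a with
    | none => rfl
    | some q' => simp [ih]

/-- In a trim partial DFA, every zig-zag state is reachable from the
initial state by at least two distinct words (no zig-zag state is a `1`-state). -/
theorem stmt18 {Q A : Type} (M : PDFA Q A) (hMtrim : M.Trim)
    (z : Q) (hz : M.ZigZag z) :
    ∃ u v : List A, u ≠ v ∧ M.run M.init u = some z ∧ M.run M.init v = some z := by
  induction hz with
  | inf h =>
    obtain ⟨u, hu, v, hv, huv⟩ := h.nontrivial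
    exact ⟨u, v, huv, hu, hv⟩
  | @fwd q a q' hq hstep ih =>
    obtain ⟨u, v, huv, hu, hv⟩ := ih
    refine ⟨u ++ [a], v ++ [a], ?_, ?_, ?_⟩
    · simpa using huv
    · simp [run_append, hu, PDFA.run, hstep]
    · simp [run_append, hv, PDFA.run, hstep]
  | @back q a q' hplus _ _ _ =>
    obtain ⟨u, hu⟩ := (hMtrim q).1
    have : ¬ ∀ v, v ∈ M.AccessWords q → v = u := fun h => hplus.1 ⟨u, hu, h⟩
    push_neg at this
    obtain ⟨v, hv, hvu⟩ := this
    exact ⟨v, u, hvu, hv, hu⟩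
end
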